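/- Let f : R^n → R be differentiable and L-smooth on a compact convex set C, p > L, and define v(z) := min_{x ∈ C} [f(x) + (p/2)‖x - z‖²] with minimizer x(z). Then v is differentiable with ∇v(z) = p(z - x(z)), and ∇v is Lipschitz continuous with constant p(p/(p-L) + 1) on C; consequently, for any z, z' ∈ C, v(z') - v(z) ≤ ⟨p(z - x(z)), z' - z⟩ + (p/2)(p/(p-L) + 1)‖z - z'‖². -/

import Mathlib

open scoped RealInnerProductSpace

lemma quad_bound {n : ℕ} (f : EuclideanSpace ℝ (Fin n) → ℝ)
    (f' : EuclideanSpace ℝ (Fin n) → EuclideanSpace ℝ (Fin n)) (L : ℝ) (hL : 0 ≤ L)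
    (hdiff : ∀ x, HasGradientAt f (f' x) x)
    (hlip : ∀ x x', ‖f' x - f' x'‖ ≤ L * ‖x - x'‖) (x y : EuclideanSpace ℝ (Fin n)) :
    |f y - f x - ⟪f' x, y - x⟫| ≤ L / 2 * ‖y - x‖ ^ 2 := by
  set d := y - x with hd
  have hcont : Continuous f' := by
    have : LipschitzWith (Real.toNNReal L) f' := by
      apply LipschitzWith.of_dist_le_mul
      intro a b
      simpa [dist_eq_norm, Real.coe_toNNReal L hL] using hlip a b
    exact this.continuous
  have hline : ∀ t : ℝ, HasDerivAt (fun s : ℝ => x + s • d) d t := by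
    intro t
    simpa using ((hasDerivAt_id t).smul_const d).const_add x
  have hφ : ∀ t : ℝ, HasDerivAt (fun s => f (x + s • d) - s * ⟪f' x, d⟫)
      (⟪f' (x + t • d), d⟫ - ⟪f' x, d⟫) t := by
    intro t
    have h1 : HasDerivAt (fun s => f (x + s • d)) ⟪f' (x + t • d), d⟫ t := by
      have := (hdiff (x + t • d)).hasFDerivAt.comp_hasDerivAt t (hline t)
      simp at this
      exact this
    exact h1.sub (hasDerivAt_mul_const _)
  have hlinec : Continuous (fun t : ℝ => x + t • d) :=
    continuous_const.add (continuous_id.smul continuous_const)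
  have hcint : Continuous (fun t : ℝ => ⟪f' (x + t • d), d⟫ - ⟪f' x, d⟫) :=
    (((hcont.comp hlinec).inner continuous_const)).sub continuous_const
  have hxd : x + d = y := by rw [hd]; abel
  have key : f y - f x - ⟪f' x, d⟫ = ∫ t in (0:ℝ)..1, (⟪f' (x + t • d), d⟫ - ⟪f' x, d⟫) := by
    have := intervalIntegral.integral_eq_sub_of_hasDerivAt
      (f := fun s => f (x + s • d) - s * ⟪f' x, d⟫)
      (fun t _ => hφ t) (hcint.intervalIntegrable 0 1)
    simp only [one_smul, zero_smul, add_zero] at this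
    rw [this, hxd]; ring
  rw [key]
  have hb : ∀ t ∈ Set.Icc (0:ℝ) 1, |⟪f' (x + t • d), d⟫ - ⟪f' x, d⟫| ≤ (L * ‖d‖^2) * t := by
    intro t ht
    have h1 : ⟪f' (x + t • d), d⟫ - ⟪f' x, d⟫ = ⟪f' (x + t • d) - f' x, d⟫ := by
      rw [inner_sub_left]
    rw [h1]
    calc |⟪f' (x + t • d) - f' x, d⟫| ≤ ‖f' (x + t • d) - f' x‖ * ‖d‖ := by
          exact abs_real_inner_le_norm _ _
      _ ≤ (L * ‖x + t • d - x‖) * ‖d‖ := by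
          gcongr; exact hlip _ _
      _ = (L * ‖d‖^2) * t := by
          have : x + t • d - x = t • d := by abel
          rw [this, norm_smul, Real.norm_eq_abs, abs_of_nonneg ht.1]
          ring
  calc |∫ t in (0:ℝ)..1, (⟪f' (x + t • d), d⟫ - ⟪f' x, d⟫)|
      ≤ ∫ t in (0:ℝ)..1, |⟪f' (x + t • d), d⟫ - ⟪f' x, d⟫| := by
        simpa using intervalIntegral.norm_integral_le_integral_norm (f := fun t : ℝ => ⟪f' (x + t • d), d⟫ - ⟪f' x, d⟫) (a := 0) (b := 1) (by norm_num)
    _ ≤ ∫ t in (0:ℝ)..1, (L * ‖d‖^2) * t := by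
        apply intervalIntegral.integral_mono_on (by norm_num)
          (hcint.abs.intervalIntegrable 0 1)
          ((continuous_const.mul continuous_id).intervalIntegrable 0 1) hb
    _ = L / 2 * ‖d‖ ^ 2 := by
        rw [intervalIntegral.integral_const_mul, integral_id]
        ring

lemma opt_cond {n : ℕ} (f : EuclideanSpace ℝ (Fin n) → ℝ)
    (f' : EuclideanSpace ℝ (Fin n) → EuclideanSpace ℝ (Fin n))
    (L p : ℝ) (hL : 0 ≤ L) (hp : L < p)
    (C : Set (EuclideanSpace ℝ (Fin n))) (hCconv : Convex ℝ C)
    (hdiff : ∀ x, HasGradientAt f (f' x) x)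
    (hlip : ∀ x x', ‖f' x - f' x'‖ ≤ L * ‖x - x'‖)
    (xz : EuclideanSpace ℝ (Fin n) → EuclideanSpace ℝ (Fin n))
    (hxz : ∀ z, xz z ∈ C ∧
      ∀ u ∈ C, f (xz z) + p / 2 * ‖xz z - z‖ ^ 2 ≤ f u + p / 2 * ‖u - z‖ ^ 2)
    (z : EuclideanSpace ℝ (Fin n)) (u : EuclideanSpace ℝ (Fin n)) (hu : u ∈ C) :
    0 ≤ ⟪f' (xz z), u - xz z⟫ + p * ⟪xz z - z, u - xz z⟫ := by
  set x := xz z with hx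
  set a := ⟪f' x, u - x⟫ + p * ⟪x - z, u - x⟫ with ha
  set c := (L + p) / 2 * ‖u - x‖ ^ 2 with hc
  have hc0 : 0 ≤ c := mul_nonneg (by linarith) (by positivity)
  have key : ∀ t : ℝ, 0 < t → t ≤ 1 → 0 ≤ t * a + c * t ^ 2 := by
    intro t ht0 ht1
    have hw : x + t • (u - x) ∈ C := by
      have := hCconv (hxz z).1 hu (by linarith : (0:ℝ) ≤ 1 - t) (le_of_lt ht0) (by ring)
      convert this using 1
      module
    set w := x + t • (u - x) with hwdef
    have hmin := (hxz z).2 w hw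
    have hquad := (abs_le.1 (quad_bound f f' L hL hdiff hlip x w)).2
    have hwx : w - x = t • (u - x) := by rw [hwdef]; abel
    have hwz : w - z = (x - z) + t • (u - x) := by rw [hwdef]; abel
    have hnorm : ‖w - z‖ ^ 2 = ‖x - z‖ ^ 2 + 2 * (t * ⟪x - z, u - x⟫) + t ^ 2 * ‖u - x‖ ^ 2 := by
      rw [hwz, @norm_add_sq_real, real_inner_smul_right, norm_smul, Real.norm_eq_abs,
        abs_of_nonneg ht0.le, mul_pow]
    have hinner : ⟪f' x, w - x⟫ = t * ⟪f' x, u - x⟫ := by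
      rw [hwx, real_inner_smul_right]
    have hnwx : ‖w - x‖ ^ 2 = t ^ 2 * ‖u - x‖ ^ 2 := by
      rw [hwx, norm_smul, Real.norm_eq_abs, abs_of_nonneg ht0.le, mul_pow]
    rw [hinner, hnwx] at hquad
    rw [hnorm] at hmin
    rw [ha, hc]
    nlinarith [hquad, hmin]
  by_contra hneg
  push_neg at hneg
  set t := min 1 (-a / (c + 1)) with htdef
  have ht0 : 0 < t := lt_min one_pos (div_pos (by linarith) (by linarith))
  have ht1 : t ≤ 1 := min_le_left _ _
  have h2 : t * (c + 1) ≤ -a := by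
    rw [← le_div_iff₀ (by linarith)]
    exact min_le_right _ _
  have h1 := key t ht0 ht1
  nlinarith [h1, h2, ht0]

lemma growth {n : ℕ} (f : EuclideanSpace ℝ (Fin n) → ℝ)
    (f' : EuclideanSpace ℝ (Fin n) → EuclideanSpace ℝ (Fin n))
    (L p : ℝ) (hL : 0 ≤ L) (hp : L < p)
    (C : Set (EuclideanSpace ℝ (Fin n))) (hCconv : Convex ℝ C)
    (hdiff : ∀ x, HasGradientAt f (f' x) x)
    (hlip : ∀ x x', ‖f' x - f' x'‖ ≤ L * ‖x - x'‖)
    (xz : EuclideanSpace ℝ (Fin n) → EuclideanSpace ℝ (Fin n))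
    (hxz : ∀ z, xz z ∈ C ∧
      ∀ u ∈ C, f (xz z) + p / 2 * ‖xz z - z‖ ^ 2 ≤ f u + p / 2 * ‖u - z‖ ^ 2)
    (z : EuclideanSpace ℝ (Fin n)) (u : EuclideanSpace ℝ (Fin n)) (hu : u ∈ C) :
    f (xz z) + p / 2 * ‖xz z - z‖ ^ 2 + (p - L) / 2 * ‖u - xz z‖ ^ 2
      ≤ f u + p / 2 * ‖u - z‖ ^ 2 := by
  set x := xz z with hx
  have hquad := (abs_le.1 (quad_bound f f' L hL hdiff hlip x u)).1
  have hopt := opt_cond f f' L p hL hp C hCconv hdiff hlip xz hxz z u hu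
  have hnorm : ‖u - z‖ ^ 2 = ‖x - z‖ ^ 2 + 2 * ⟪x - z, u - x⟫ + ‖u - x‖ ^ 2 := by
    have : u - z = (x - z) + (u - x) := by abel
    rw [this, @norm_add_sq_real]
  rw [hnorm]
  nlinarith [hquad, hopt]

lemma xz_lip {n : ℕ} (f : EuclideanSpace ℝ (Fin n) → ℝ)
    (f' : EuclideanSpace ℝ (Fin n) → EuclideanSpace ℝ (Fin n))
    (L p : ℝ) (hL : 0 ≤ L) (hp : L < p)
    (C : Set (EuclideanSpace ℝ (Fin n))) (hCconv : Convex ℝ C)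
    (hdiff : ∀ x, HasGradientAt f (f' x) x)
    (hlip : ∀ x x', ‖f' x - f' x'‖ ≤ L * ‖x - x'‖)
    (xz : EuclideanSpace ℝ (Fin n) → EuclideanSpace ℝ (Fin n))
    (hxz : ∀ z, xz z ∈ C ∧
      ∀ u ∈ C, f (xz z) + p / 2 * ‖xz z - z‖ ^ 2 ≤ f u + p / 2 * ‖u - z‖ ^ 2)
    (z z' : EuclideanSpace ℝ (Fin n)) :
    ‖xz z - xz z'‖ ≤ p / (p - L) * ‖z - z'‖ := by
  set x := xz z with hx
  set x' := xz z' with hx'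
  have h1 := growth f f' L p hL hp C hCconv hdiff hlip xz hxz z x' (hxz z').1
  have h2 := growth f f' L p hL hp C hCconv hdiff hlip xz hxz z' x (hxz z).1
  simp only [← hx, ← hx'] at h1 h2
  have hrev : ‖x - x'‖ = ‖x' - x‖ := norm_sub_rev _ _
  have hrev2 : ‖x - x'‖ ^ 2 = ‖x' - x‖ ^ 2 := by rw [hrev]
  have hkey : (p - L) * ‖x - x'‖ ^ 2 ≤ p * ⟪x' - x, z' - z⟫ := by
    have hid : p / 2 * ‖x' - z‖ ^ 2 - p / 2 * ‖x' - z'‖ ^ 2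
        - (p / 2 * ‖x - z‖ ^ 2 - p / 2 * ‖x - z'‖ ^ 2) = p * ⟪x' - x, z' - z⟫ := by
      simp only [@norm_sub_sq_real, inner_sub_left, inner_sub_right]
      ring
    rw [← hid, hrev]
    nlinarith [h1, h2, hrev2]
  have hcs : ⟪x' - x, z' - z⟫ ≤ ‖x - x'‖ * ‖z - z'‖ := by
    calc ⟪x' - x, z' - z⟫ ≤ ‖x' - x‖ * ‖z' - z‖ := real_inner_le_norm _ _
      _ = ‖x - x'‖ * ‖z - z'‖ := by rw [norm_sub_rev x' x, norm_sub_rev z' z]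
  have hpL : 0 < p - L := by linarith
  have hp0 : 0 < p := lt_of_le_of_lt hL hp
  rcases eq_or_lt_of_le (norm_nonneg (x - x')) with h0 | h0
  · rw [← h0]; positivity
  · rw [div_mul_eq_mul_div, le_div_iff₀ hpL]
    nlinarith [hkey, hcs, h0]

lemma env_upper {n : ℕ} (f : EuclideanSpace ℝ (Fin n) → ℝ) (p : ℝ)
    (C : Set (EuclideanSpace ℝ (Fin n)))
    (xz : EuclideanSpace ℝ (Fin n) → EuclideanSpace ℝ (Fin n))
    (v : EuclideanSpace ℝ (Fin n) → ℝ)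
    (hxz : ∀ z, xz z ∈ C ∧
      ∀ u ∈ C, f (xz z) + p / 2 * ‖xz z - z‖ ^ 2 ≤ f u + p / 2 * ‖u - z‖ ^ 2)
    (hv : ∀ z, v z = f (xz z) + p / 2 * ‖xz z - z‖ ^ 2)
    (z z' : EuclideanSpace ℝ (Fin n)) :
    v z' - v z ≤ ⟪p • (z - xz z), z' - z⟫ + p / 2 * ‖z - z'‖ ^ 2 := by
  have h1 : v z' ≤ f (xz z) + p / 2 * ‖xz z - z'‖ ^ 2 := by
    rw [hv z']
    exact (hxz z').2 (xz z) (hxz z).1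
  rw [hv z]
  have hid : p / 2 * ‖xz z - z'‖ ^ 2 - p / 2 * ‖xz z - z‖ ^ 2
      = ⟪p • (z - xz z), z' - z⟫ + p / 2 * ‖z - z'‖ ^ 2 := by
    simp only [@norm_sub_sq_real, inner_sub_left, inner_sub_right, real_inner_smul_left, real_inner_self_eq_norm_sq]
    ring
  linarith [h1, hid.le, hid.ge]

lemma grad_lip {n : ℕ} (f : EuclideanSpace ℝ (Fin n) → ℝ)
    (f' : EuclideanSpace ℝ (Fin n) → EuclideanSpace ℝ (Fin n))
    (L p : ℝ) (hL : 0 ≤ L) (hp : L < p)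
    (C : Set (EuclideanSpace ℝ (Fin n))) (hCconv : Convex ℝ C)
    (hdiff : ∀ x, HasGradientAt f (f' x) x)
    (hlip : ∀ x x', ‖f' x - f' x'‖ ≤ L * ‖x - x'‖)
    (xz : EuclideanSpace ℝ (Fin n) → EuclideanSpace ℝ (Fin n))
    (hxz : ∀ z, xz z ∈ C ∧
      ∀ u ∈ C, f (xz z) + p / 2 * ‖xz z - z‖ ^ 2 ≤ f u + p / 2 * ‖u - z‖ ^ 2)
    (z z' : EuclideanSpace ℝ (Fin n)) :
    ‖p • (z - xz z) - p • (z' - xz z')‖ ≤ p * (p / (p - L) + 1) * ‖z - z'‖ := by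
  have hp0 : 0 < p := lt_of_le_of_lt hL hp
  have hpL : 0 < p - L := by linarith
  have hid : p • (z - xz z) - p • (z' - xz z') = p • ((z - z') - (xz z - xz z')) := by
    module
  rw [hid, norm_smul, Real.norm_eq_abs, abs_of_pos hp0]
  have h1 : ‖(z - z') - (xz z - xz z')‖ ≤ ‖z - z'‖ + ‖xz z - xz z'‖ := norm_sub_le _ _
  have h2 := xz_lip f f' L p hL hp C hCconv hdiff hlip xz hxz z z'
  have h3 : ‖(z - z') - (xz z - xz z')‖ ≤ (p / (p - L) + 1) * ‖z - z'‖ := by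
    calc _ ≤ ‖z - z'‖ + ‖xz z - xz z'‖ := h1
      _ ≤ ‖z - z'‖ + p / (p - L) * ‖z - z'‖ := by linarith
      _ = (p / (p - L) + 1) * ‖z - z'‖ := by ring
  calc p * ‖(z - z') - (xz z - xz z')‖ ≤ p * ((p / (p - L) + 1) * ‖z - z'‖) := by
        exact mul_le_mul_of_nonneg_left h3 hp0.le
    _ = p * (p / (p - L) + 1) * ‖z - z'‖ := by ring

/-- Smoothness of the Moreau-envelope-type function `v(z) = min_{x ∈ C} [f(x) + (p/2)‖x-z‖²]`:
`∇v(z) = p(z - x(z))`, `∇v` is `p(p/(p-L) + 1)`-Lipschitz on `C`, and consequently the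
descent-type inequality holds on `C`. -/
theorem moreau_envelope_smooth
    {n : ℕ} (f : EuclideanSpace ℝ (Fin n) → ℝ)
    (f' : EuclideanSpace ℝ (Fin n) → EuclideanSpace ℝ (Fin n))
    (L p : ℝ) (hL : 0 ≤ L) (hp : L < p)
    (C : Set (EuclideanSpace ℝ (Fin n))) (hCcompact : IsCompact C) (hCconv : Convex ℝ C)
    (hdiff : ∀ x, HasGradientAt f (f' x) x)
    (hlip : ∀ x x', ‖f' x - f' x'‖ ≤ L * ‖x - x'‖)
    (xz : EuclideanSpace ℝ (Fin n) → EuclideanSpace ℝ (Fin n))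
    (v : EuclideanSpace ℝ (Fin n) → ℝ)
    (hxz : ∀ z, xz z ∈ C ∧
      ∀ u ∈ C, f (xz z) + p / 2 * ‖xz z - z‖ ^ 2 ≤ f u + p / 2 * ‖u - z‖ ^ 2)
    (hv : ∀ z, v z = f (xz z) + p / 2 * ‖xz z - z‖ ^ 2) :
    (∀ z ∈ C, HasGradientAt v (p • (z - xz z)) z) ∧
    (∀ z ∈ C, ∀ z' ∈ C,
      ‖p • (z - xz z) - p • (z' - xz z')‖ ≤ p * (p / (p - L) + 1) * ‖z - z'‖) ∧
    (∀ z ∈ C, ∀ z' ∈ C,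
      v z' - v z ≤ ⟪p • (z - xz z), z' - z⟫ + p / 2 * (p / (p - L) + 1) * ‖z - z'‖ ^ 2) := by
  have hp0 : 0 < p := lt_of_le_of_lt hL hp
  have hpL : 0 < p - L := by linarith
  refine ⟨?_, ?_, ?_⟩
  · -- gradient
    intro z _
    set G := p • (z - xz z) with hG
    have hbound : ∀ z' : EuclideanSpace ℝ (Fin n),
        |v z' - v z - ⟪G, z' - z⟫| ≤ (p / 2 + p * (p / (p - L) + 1)) * ‖z' - z‖ ^ 2 := by
      intro z'
      have hup := env_upper f p C xz v hxz hv z z'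
      rw [← hG] at hup
      have hdown := env_upper f p C xz v hxz hv z' z
      set W := p • (z' - xz z') with hW
      have hWG : ‖W - G‖ ≤ p * (p / (p - L) + 1) * ‖z' - z‖ := by
        have := grad_lip f f' L p hL hp C hCconv hdiff hlip xz hxz z' z
        calc ‖W - G‖ = ‖p • (z' - xz z') - p • (z - xz z)‖ := rfl
          _ ≤ p * (p / (p - L) + 1) * ‖z' - z‖ := this
      have hinner1 : ⟪W, z - z'⟫ = -⟪W, z' - z⟫ := by
        rw [← inner_neg_right]; congr 1; abel
      have hcs : -⟪W - G, z' - z⟫ ≤ ‖W - G‖ * ‖z' - z‖ := by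
        have := real_inner_le_norm (G - W) (z' - z)
        have h1 : ⟪G - W, z' - z⟫ = -⟪W - G, z' - z⟫ := by
          rw [← inner_neg_left]; congr 1; abel
        have h2 : ‖G - W‖ = ‖W - G‖ := norm_sub_rev _ _
        rw [h1, h2] at this
        exact this
      have hsplit : ⟪W, z' - z⟫ = ⟪G, z' - z⟫ + ⟪W - G, z' - z⟫ := by
        rw [inner_sub_left]; ring
      have hnn : ‖z - z'‖ = ‖z' - z‖ := norm_sub_rev _ _
      rw [abs_le]
      constructor
      · -- lower bound
        have : v z - v z' ≤ -⟪W, z' - z⟫ + p / 2 * ‖z' - z‖ ^ 2 := by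
          rw [← hinner1]
          exact hdown
        have hq : ‖W - G‖ * ‖z' - z‖ ≤ (p * (p / (p - L) + 1)) * ‖z' - z‖ ^ 2 := by
          have := mul_le_mul_of_nonneg_right hWG (norm_nonneg (z' - z))
          nlinarith [this]
        nlinarith [this, hcs, hq, hsplit]
      · have := hup
        rw [hnn] at this
        have hsq : (0:ℝ) ≤ ‖z' - z‖ ^ 2 := by positivity
        nlinarith [this, hsq, hWG, mul_nonneg (mul_nonneg hp0.le (by positivity : (0:ℝ) ≤ p / (p - L) + 1)) hsq]
      
    rw [hasGradientAt_iff_isLittleO]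
    have big : (fun z' => v z' - v z - ⟪G, z' - z⟫) =O[nhds z] (fun z' => ‖z' - z‖ ^ 2) := by
      apply Asymptotics.IsBigO.of_bound (p / 2 + p * (p / (p - L) + 1))
      filter_upwards with z'
      calc ‖v z' - v z - ⟪G, z' - z⟫‖ = |v z' - v z - ⟪G, z' - z⟫| := rfl
        _ ≤ (p / 2 + p * (p / (p - L) + 1)) * ‖z' - z‖ ^ 2 := hbound z'
        _ = (p / 2 + p * (p / (p - L) + 1)) * ‖‖z' - z‖ ^ 2‖ := by rw [Real.norm_eq_abs, abs_of_nonneg (by positivity)]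
    have small : (fun z' : EuclideanSpace ℝ (Fin n) => ‖z' - z‖ ^ 2) =o[nhds z]
        (fun z' => z' - z) := by
      have h1 : (fun h : EuclideanSpace ℝ (Fin n) => ‖h‖ ^ 2) =o[nhds 0] (fun h => h) :=
        Asymptotics.isLittleO_norm_pow_id (by norm_num)
      have htend : Filter.Tendsto (fun z' : EuclideanSpace ℝ (Fin n) => z' - z)
          (nhds z) (nhds 0) := by
        have h2 : Filter.Tendsto (fun z' : EuclideanSpace ℝ (Fin n) => z' - z)
            (nhds z) (nhds (z - z)) := Filter.Tendsto.sub_const Filter.tendsto_id z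
        simpa using h2
      exact h1.comp_tendsto htend
    exact big.trans_isLittleO small
  · intro z _ z' _
    exact grad_lip f f' L p hL hp C hCconv hdiff hlip xz hxz z z'
  · intro z _ z' _
    have := env_upper f p C xz v hxz hv z z'
    have hsq : (0:ℝ) ≤ ‖z - z'‖ ^ 2 := by positivity
    have hcoef : (0:ℝ) ≤ p / (p - L) := by positivity
    nlinarith [this, hsq, hcoef, mul_nonneg (mul_nonneg hp0.le hcoef) hsq]
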